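/- Let I₁, ..., I_n be N-proper ideals of R such that mAss_R(N/(I₁⋯I_n)N) = ⋃_{i=1}^n mAss_R(N/I_i N), and suppose the I_i-symbolic topology on N is equivalent to the I_i-adic topology on N for each i. Then the (I₁⋯I_n)-symbolic topology on N is equivalent to the (I₁⋯I_n)-adic topology on N, and likewise for I₁ ∩ ⋯ ∩ I_n. -/

import Mathlib

open Ideal

/-- The set of minimal associated primes of an `R`-module `M`. -/
def mAss (R : Type*) [CommRing R] (M : Type*) [AddCommGroup M] [Module R M] : Set (Ideal R) :=
  {p | Minimal (· ∈ associatedPrimes R M) p}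

/-- The `n`-th symbolic power of `I` with respect to `N`:
elements `x ∈ N` with `s • x ∈ I ^ n • N` for some `s` outside every minimal prime of
`Ass_R (N / I N)`. -/
def symbPow (R : Type*) [CommRing R] (I : Ideal R) (N : Type*) [AddCommGroup N] [Module R N]
    (n : ℕ) : Set N :=
  {x | ∃ s : R, (∀ p ∈ mAss R (N ⧸ (I • ⊤ : Submodule R N)), s ∉ p) ∧
    s • x ∈ (I ^ n • ⊤ : Submodule R N)}

/-- The `I`-symbolic topology on `N` is equivalent to the `I`-adic topology on `N`. -/
def symbEquivAdic (R : Type*) [CommRing R] (I : Ideal R) (N : Type*) [AddCommGroup N]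
    [Module R N] : Prop :=
  ∀ n : ℕ, ∃ m : ℕ, symbPow R I N m ⊆ (I ^ n • ⊤ : Submodule R N)

section Aux

/-- Any minimal prime over the annihilator of a finitely generated module over a Noetherian
ring is an associated prime. -/
lemma mem_associatedPrimes_of_mem_minimalPrimes_annihilator
    {R : Type*} [CommRing R] [IsNoetherianRing R]
    {M : Type*} [AddCommGroup M] [Module R M] [Module.Finite R M]
    {p : Ideal R} (hp : p ∈ (Module.annihilator R M).minimalPrimes) :
    p ∈ associatedPrimes R M := by
  obtain ⟨⟨hprime, hle⟩, hmin⟩ := hp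
  letI S := p.primeCompl
  letI Rp := Localization S
  letI Mp := LocalizedModule S M
  have hnt : Nontrivial Mp := by
    have : (⟨p, hprime⟩ : PrimeSpectrum R) ∈ Module.support R M := by
      rw [Module.support_eq_zeroLocus]; exact hle
    exact this
  have hnoeth : IsNoetherianRing Rp := IsLocalization.isNoetherianRing S Rp inferInstance
  obtain ⟨P, hP⟩ := associatedPrimes.nonempty Rp Mp
  obtain ⟨hPprime, y, hy⟩ := isAssociatedPrime_iff.mp hP
  obtain ⟨m, s, rfl⟩ : ∃ m s, y = LocalizedModule.mk m s := by
    induction y using LocalizedModule.induction_on with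
    | h m s => exact ⟨m, s, rfl⟩
  have hymem : ∀ a : R, algebraMap R Rp a • LocalizedModule.mk m s = 0 ↔
      a ∈ P.comap (algebraMap R Rp) := by
    intro a
    rw [Ideal.mem_comap, hy, Submodule.mem_colon_singleton, Submodule.mem_bot]
  -- the contraction q of P equals p
  have hPne : P ≠ ⊤ := hPprime.ne_top
  have hqle : P.comap (algebraMap R Rp) ≤ p := by
    have h1 : P ≤ IsLocalRing.maximalIdeal Rp := IsLocalRing.le_maximalIdeal hPne
    have := Ideal.comap_mono (f := algebraMap R Rp) h1
    exact this.trans (Localization.AtPrime.under_maximalIdeal).le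
  have hannq : Module.annihilator R M ≤ P.comap (algebraMap R Rp) := by
    intro a ha
    rw [← hymem]
    rw [algebraMap_smul, LocalizedModule.smul'_mk, Module.mem_annihilator.mp ha,
      LocalizedModule.zero_mk]
  have hq : P.comap (algebraMap R Rp) = p :=
    le_antisymm hqle (hmin ⟨Ideal.IsPrime.comap _, hannq⟩ hqle)
  -- p is finitely generated
  obtain ⟨T, hT⟩ := IsNoetherian.noetherian p
  -- for each a ∈ T, find t ∈ S with t • a • m = 0
  have key : ∀ a ∈ T, ∃ t : S, (t : R) • a • m = 0 := by
    intro a haT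
    have hap : a ∈ p := hT ▸ Submodule.subset_span haT
    have : algebraMap R Rp a • LocalizedModule.mk m s = 0 := by
      rw [hymem, hq]; exact hap
    rw [algebraMap_smul, LocalizedModule.smul'_mk, ← LocalizedModule.zero_mk (1 : S),
      LocalizedModule.mk_eq] at this
    obtain ⟨u, hu⟩ := this
    refine ⟨u, ?_⟩
    simpa [Submonoid.smul_def] using hu
  choose! t ht using key
  classical
  let t₀ : S := ∏ a ∈ T, t a
  have ht₀ : ∀ a ∈ T, a • ((t₀ : R) • m) = 0 := by
    intro a ha
    have h1 : t₀ = t a * ∏ x ∈ T.erase a, t x := (Finset.mul_prod_erase T t ha).symm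
    rw [h1, Submonoid.coe_mul, mul_comm, mul_smul, smul_comm a, smul_comm a, ht a ha, smul_zero]
  refine AssociatedPrimes.mem_iff.mpr (isAssociatedPrime_iff.mpr ⟨hprime, (t₀ : R) • m, le_antisymm ?_ ?_⟩)
  · rw [← hT, Submodule.span_le]
    intro a ha
    rw [SetLike.mem_coe, Submodule.mem_colon_singleton, Submodule.mem_bot]
    exact ht₀ a ha
  · intro b hb
    rw [Submodule.mem_colon_singleton, Submodule.mem_bot] at hb
    rw [← hq, ← hymem]
    rw [algebraMap_smul, LocalizedModule.smul'_mk, ← LocalizedModule.zero_mk (1 : S),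
      LocalizedModule.mk_eq]
    refine ⟨t₀, ?_⟩
    simp only [smul_zero, one_smul, Submonoid.smul_def]
    rw [smul_comm]
    exact hb

/-- For a finitely generated module over a Noetherian ring, the minimal associated primes
are exactly the minimal primes over the annihilator. -/
lemma mAss_eq_minimalPrimes {R : Type*} [CommRing R] [IsNoetherianRing R]
    (M : Type*) [AddCommGroup M] [Module R M] [Module.Finite R M] :
    mAss R M = (Module.annihilator R M).minimalPrimes := by
  ext p
  constructor
  · rintro ⟨hmem, hmin⟩
    haveI := hmem.isPrime
    have hle : Module.annihilator R M ≤ p := by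
      rw [← Submodule.annihilator_top]; exact hmem.annihilator_le
    obtain ⟨q, hq, hqle⟩ := Ideal.exists_minimalPrimes_le hle
    have hqass := mem_associatedPrimes_of_mem_minimalPrimes_annihilator hq
    have : p = q := le_antisymm (hmin hqass hqle) hqle
    exact this ▸ hq
  · intro hp
    have hass := mem_associatedPrimes_of_mem_minimalPrimes_annihilator hp
    refine ⟨hass, fun q hq hqle => hp.2 ⟨hq.isPrime, ?_⟩ hqle⟩
    rw [← Submodule.annihilator_top]; exact hq.annihilator_le

lemma minimalPrimes_eq_of_radical_eq {R : Type*} [CommRing R] {I J : Ideal R}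
    (h : I.radical = J.radical) : I.minimalPrimes = J.minimalPrimes := by
  have hpred : (fun q : Ideal R => q.IsPrime ∧ I ≤ q) = (fun q => q.IsPrime ∧ J ≤ q) := by
    funext q
    apply propext
    constructor
    · rintro ⟨h1, h2⟩
      refine ⟨h1, h1.radical_le_iff.mp ?_⟩
      rw [← h]
      exact h1.radical_le_iff.mpr h2
    · rintro ⟨h1, h2⟩
      refine ⟨h1, h1.radical_le_iff.mp ?_⟩
      rw [h]
      exact h1.radical_le_iff.mpr h2
  unfold Ideal.minimalPrimes
  simp only [Ideal.IsMinimalPrime, hpred]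

lemma mem_ann_quot {R : Type*} [CommRing R] {N : Type*} [AddCommGroup N] [Module R N]
    (K : Submodule R N) (a : R) :
    a ∈ Module.annihilator R (N ⧸ K) ↔ ∀ x : N, a • x ∈ K := by
  rw [Module.mem_annihilator]
  constructor
  · intro h x
    have := h (Submodule.Quotient.mk x)
    rwa [← Submodule.Quotient.mk_smul, Submodule.Quotient.mk_eq_zero] at this
  · intro h y
    obtain ⟨x, rfl⟩ := Submodule.Quotient.mk_surjective K y
    rw [← Submodule.Quotient.mk_smul, Submodule.Quotient.mk_eq_zero]
    exact h x

lemma prod_ideal_mono {R : Type*} [CommRing R] {ι : Type*} (s : Finset ι) (f g : ι → Ideal R)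
    (h : ∀ i ∈ s, f i ≤ g i) : s.prod f ≤ s.prod g := by
  classical
  induction s using Finset.induction_on with
  | empty => simp
  | @insert a s ha ih =>
    rw [Finset.prod_insert ha, Finset.prod_insert ha]
    exact Ideal.mul_mono (h a (Finset.mem_insert_self a s))
      (ih fun i hi => h i (Finset.mem_insert_of_mem hi))

/-- Artin--Rees, inequality form, valid across universes. -/
lemma artin_rees_le {R : Type*} [CommRing R] [IsNoetherianRing R]
    {M : Type*} [AddCommGroup M] [Module R M] [Module.Finite R M]
    (I : Ideal R) (K : Submodule R M) :
    ∃ c : ℕ, ∀ n ≥ c, (I ^ n • ⊤ : Submodule R M) ⊓ K ≤ I ^ (n - c) • K := by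
  obtain ⟨t, π, hπ⟩ := Module.Finite.exists_fin' R M
  obtain ⟨c, hc⟩ := Ideal.exists_pow_inf_eq_pow_smul I (K.comap π)
  refine ⟨c, fun n hn x hx => ?_⟩
  obtain ⟨y, hy, rfl⟩ : ∃ y ∈ (I ^ n • ⊤ : Submodule R (Fin t → R)), π y = x := by
    have : x ∈ Submodule.map π (I ^ n • ⊤ : Submodule R (Fin t → R)) := by
      rw [Submodule.map_smul'', Submodule.map_top, LinearMap.range_eq_top.mpr hπ]
      exact hx.1
    exact this
  have hy2 : y ∈ (I ^ (n - c) • K.comap π : Submodule R (Fin t → R)) := by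
    have hmem : y ∈ (I ^ n • ⊤ : Submodule R (Fin t → R)) ⊓ K.comap π := ⟨hy, hx.2⟩
    rw [hc n hn] at hmem
    exact Submodule.smul_mono le_rfl inf_le_right hmem
  have hmap : π y ∈ Submodule.map π (I ^ (n - c) • K.comap π) := Submodule.mem_map_of_mem hy2
  rw [Submodule.map_smul''] at hmap
  exact Submodule.smul_mono le_rfl (Submodule.map_comap_le _ _) hmap

lemma ar_combine {R : Type*} [CommRing R] [IsNoetherianRing R]
    (N : Type*) [AddCommGroup N] [Module R N] [Module.Finite R N]
    {ι : Type*} (I : ι → Ideal R) (s : Finset ι) (n : ℕ) :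
    ∃ r : ℕ, (⨅ i ∈ s, ((I i) ^ r • ⊤ : Submodule R N)) ≤ (∏ i ∈ s, I i) ^ n • ⊤ := by
  classical
  induction s using Finset.induction_on with
  | empty => exact ⟨0, by simp [Ideal.one_eq_top, Ideal.top_pow]⟩
  | @insert a s ha ih =>
    obtain ⟨r₁, hr₁⟩ := ih
    obtain ⟨c, hc⟩ := artin_rees_le (I a)
      ((∏ i ∈ s, I i) ^ n • ⊤ : Submodule R N)
    refine ⟨max (n + c) r₁, ?_⟩
    have h1 : (⨅ i ∈ insert a s, ((I i) ^ (max (n + c) r₁) • ⊤ : Submodule R N)) ≤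
        ((I a) ^ (n + c) • ⊤ : Submodule R N) ⊓ ((∏ i ∈ s, I i) ^ n • ⊤ : Submodule R N) := by
      apply le_inf
      · refine le_trans (iInf₂_le a (Finset.mem_insert_self a s)) ?_
        exact Submodule.smul_mono (Ideal.pow_le_pow_right (le_max_left _ _)) le_rfl
      · refine le_trans ?_ hr₁
        refine le_iInf₂ fun i hi => ?_
        refine le_trans (iInf₂_le i (Finset.mem_insert_of_mem hi)) ?_
        exact Submodule.smul_mono (Ideal.pow_le_pow_right (le_max_right _ _)) le_rfl
    refine h1.trans ?_
    have h2 := hc (n + c) (Nat.le_add_left c n)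
    rw [Nat.add_sub_cancel] at h2
    have h3 : ((∏ i ∈ insert a s, I i) ^ n • ⊤ : Submodule R N) =
        I a ^ n • ((∏ i ∈ s, I i) ^ n • ⊤ : Submodule R N) := by
      rw [Finset.prod_insert ha, mul_pow, mul_smul]
    rw [h3]
    exact h2

lemma symbPow_anti {R : Type*} [CommRing R] (I : Ideal R) (N : Type*) [AddCommGroup N]
    [Module R N] {m m' : ℕ} (h : m' ≤ m) : symbPow R I N m ⊆ symbPow R I N m' := by
  rintro x ⟨s, hs, hx⟩
  exact ⟨s, hs, Submodule.smul_mono (Ideal.pow_le_pow_right h) le_rfl hx⟩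

end Aux

theorem stmt5 (R : Type*) [CommRing R] [IsNoetherianRing R]
    (N : Type*) [AddCommGroup N] [Module R N] [Module.Finite R N] [Nontrivial N]
    (k : ℕ) (I : Fin k → Ideal R)
    (hprop : ∀ i, ((I i) • ⊤ : Submodule R N) ≠ ⊤)
    (hass : mAss R (N ⧸ ((∏ i, I i) • ⊤ : Submodule R N)) =
      ⋃ i, mAss R (N ⧸ ((I i) • ⊤ : Submodule R N)))
    (he : ∀ i, symbEquivAdic R (I i) N) :
    symbEquivAdic R (∏ i, I i) N ∧ symbEquivAdic R (⨅ i, I i) N := by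
  classical
  set P : Ideal R := ∏ i, I i with hPdef
  set J : Ideal R := ⨅ i, I i with hJdef
  have hPle : ∀ i, P ≤ I i := fun i =>
    (Ideal.prod_le_inf).trans (Finset.inf_le (Finset.mem_univ i))
  have hPJ : P ≤ J := le_iInf hPle
  have hJk : J ^ k ≤ P := by
    calc J ^ k = ∏ _i : Fin k, J := by
          rw [Finset.prod_const, Finset.card_univ, Fintype.card_fin]
    _ ≤ ∏ i, I i := prod_ideal_mono _ _ _ fun i _ => iInf_le _ i
  have goal1 : symbEquivAdic R P N := by
    intro n
    obtain ⟨r, hr⟩ := ar_combine N I Finset.univ n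
    choose m hm using fun i => he i r
    refine ⟨Finset.univ.sup m, fun x hx => ?_⟩
    have hx' : ∀ i, x ∈ ((I i) ^ r • ⊤ : Submodule R N) := by
      intro i
      have h1 : x ∈ symbPow R (I i) N (Finset.univ.sup m) := by
        obtain ⟨s, hs, hsx⟩ := hx
        refine ⟨s, fun p hp => hs p ?_,
          Submodule.smul_mono (Ideal.pow_right_mono (hPle i) _) le_rfl hsx⟩
        rw [hass]; exact Set.mem_iUnion.mpr ⟨i, hp⟩
      exact hm i (symbPow_anti _ _ (Finset.le_sup (Finset.mem_univ i)) h1)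
    refine hr ?_
    simp only [Submodule.mem_iInf]
    exact fun i _ => hx' i
  -- the two annihilators have the same radical
  have hann : (Module.annihilator R (N ⧸ (P • ⊤ : Submodule R N))).radical =
      (Module.annihilator R (N ⧸ (J • ⊤ : Submodule R N))).radical := by
    apply le_antisymm
    · apply Ideal.radical_mono
      intro a ha
      rw [mem_ann_quot] at ha ⊢
      exact fun x => Submodule.smul_mono hPJ le_rfl (ha x)
    · intro a ha
      obtain ⟨n, han⟩ := ha
      refine ⟨n * k, ?_⟩
      rw [mem_ann_quot] at han ⊢
      set A : Ideal R := Ideal.span {a ^ n} with hAdef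
      have hA0 : (A • ⊤ : Submodule R N) ≤ J • ⊤ := by
        rw [Submodule.smul_le]
        rintro r hr x -
        obtain ⟨c, rfl⟩ := Ideal.mem_span_singleton'.mp hr
        rw [mul_smul]
        exact Submodule.smul_mem _ c (han x)
      have hA : ∀ j, (A ^ j • ⊤ : Submodule R N) ≤ J ^ j • ⊤ := by
        intro j
        induction j with
        | zero => simp
        | succ j ih =>
          calc (A ^ (j + 1) • ⊤ : Submodule R N) = (A ^ j * A) • ⊤ := by rw [pow_succ]
          _ = A ^ j • (A • ⊤) := mul_smul _ _ _
          _ ≤ A ^ j • (J • ⊤) := Submodule.smul_mono le_rfl hA0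
          _ = (A ^ j * J) • ⊤ := (mul_smul _ _ _).symm
          _ = (J * A ^ j) • ⊤ := by rw [mul_comm]
          _ = J • (A ^ j • ⊤) := mul_smul _ _ _
          _ ≤ J • (J ^ j • ⊤) := Submodule.smul_mono le_rfl ih
          _ = (J * J ^ j) • ⊤ := (mul_smul _ _ _).symm
          _ = J ^ (j + 1) • ⊤ := by rw [← pow_succ']
      intro x
      have h1 : a ^ (n * k) • x ∈ (A ^ k • ⊤ : Submodule R N) := by
        rw [pow_mul]
        exact Submodule.smul_mem_smul (Ideal.pow_mem_pow (Ideal.mem_span_singleton_self _) k)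
          Submodule.mem_top
      exact Submodule.smul_mono hJk le_rfl ((hA k) h1)
  have hmassEq : mAss R (N ⧸ (P • ⊤ : Submodule R N)) = mAss R (N ⧸ (J • ⊤ : Submodule R N)) := by
    rw [mAss_eq_minimalPrimes, mAss_eq_minimalPrimes, minimalPrimes_eq_of_radical_eq hann]
  refine ⟨goal1, ?_⟩
  intro n
  obtain ⟨m, hm⟩ := goal1 n
  refine ⟨k * m, fun x hx => ?_⟩
  obtain ⟨s, hs, hsx⟩ := hx
  have hx' : x ∈ symbPow R P N m := by
    refine ⟨s, fun p hp => hs p (hmassEq ▸ hp), ?_⟩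
    have hle : J ^ (k * m) ≤ P ^ m := by
      rw [pow_mul]
      exact Ideal.pow_right_mono hJk m
    exact Submodule.smul_mono hle le_rfl hsx
  exact Submodule.smul_mono (Ideal.pow_right_mono hPJ n) le_rfl (hm hx')
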